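/- If X ∈ ℝ^{d_x} and Y ∈ ℝ^{d_y} are independent random vectors each satisfying the Lipschitz concentration property, then the concatenated vector Z = [X, Y] ∈ ℝ^{d_x + d_y} also satisfies the Lipschitz concentration property. -/

import Mathlib

open MeasureTheory
open scoped ENNReal NNReal

/-- Lipschitz concentration property with constant `c`. -/
def LipConc {Ω E : Type*} [MeasurableSpace Ω] [PseudoMetricSpace E]
    (μ : Measure Ω) (X : Ω → E) (c : ℝ) : Prop :=
  ∀ (L : NNReal) (τ : E → ℝ), LipschitzWith L τ → ∀ t > 0,
    μ {ω | t < |τ (X ω) - ∫ ω', τ (X ω') ∂μ|} ≤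
      ENNReal.ofReal (2 * Real.exp (-(c * t ^ 2) / (L : ℝ) ^ 2))

/-- If `X ∈ ℝ^{d_x}` and `Y ∈ ℝ^{d_y}` are independent random vectors each
satisfying the Lipschitz concentration property, then the concatenated vector
`Z = [X, Y] ∈ ℝ^{d_x + d_y}` also satisfies the Lipschitz concentration property. -/
lemma coord_lip {ι : Type*} [Fintype ι] (i : ι) (a : ℝ) :
    LipschitzWith 1 (fun v : EuclideanSpace ℝ ι => v i + a) := by
  refine LipschitzWith.of_dist_le_mul fun x y => ?_
  rw [NNReal.coe_one, one_mul, EuclideanSpace.dist_eq, dist_add_right]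
  have : dist (x i) (y i) = Real.sqrt (dist (x i) (y i) ^ 2) := by
    rw [Real.sqrt_sq dist_nonneg]
  rw [this]
  apply Real.sqrt_le_sqrt
  exact Finset.single_le_sum (f := fun j => dist (x j) (y j) ^ 2)
    (fun j _ => sq_nonneg _) (Finset.mem_univ i)

lemma aemeasurable_pi' {Ω ι : Type*} [MeasurableSpace Ω] [Countable ι]
    {μ : Measure Ω} {X : Ω → EuclideanSpace ℝ ι}
    (h : ∀ i, AEMeasurable (fun ω => X ω i) μ) : AEMeasurable X μ := by
  choose g hg hXg using fun i => h i
  refine ⟨fun ω => WithLp.toLp 2 (fun i => g i ω), ?_, ?_⟩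
  · exact (MeasurableEquiv.toLp 2 (ι → ℝ)).measurable.comp (measurable_pi_lambda _ fun i => hg i)
  · have := MeasureTheory.ae_all_iff.mpr hXg
    filter_upwards [this] with ω hω
    ext i
    exact hω i

lemma lipconc_aemeasurable {Ω ι : Type*} [MeasurableSpace Ω] [Fintype ι]
    {μ : Measure Ω} [IsProbabilityMeasure μ] {X : Ω → EuclideanSpace ℝ ι} {c : ℝ}
    (hc : 0 < c) (h : LipConc μ X c) : AEMeasurable X μ := by
  apply aemeasurable_pi'
  intro i
  by_contra hmi
  have key : ∀ a : ℝ, ¬ AEMeasurable (fun ω => X ω i + a) μ := by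
    intro a hA
    apply hmi
    simpa using hA.sub_const a
  have hint : ∀ a : ℝ, ∫ ω, (X ω i + a) ∂μ = 0 := by
    intro a
    apply integral_undef
    intro hInt
    exact key a (aestronglyMeasurable_iff_aemeasurable.mp hInt.1)
  set M : ℝ := 9 / Real.sqrt c with hMdef
  have hsc : 0 < Real.sqrt c := Real.sqrt_pos.mpr hc
  have hM : 0 < M := by positivity
  have hM2 : M ^ 2 = 81 / c := by
    rw [hMdef, div_pow, Real.sq_sqrt hc.le]; norm_num
  have h1 := h 1 (fun v => v i + M) (coord_lip i M) (M/3) (by positivity)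
  have h2 := h 1 (fun v => v i + 0) (coord_lip i 0) (M/2) (by positivity)
  simp only [hint] at h1 h2
  set A : Set Ω := {ω | M/3 < |X ω i + M - 0|} with hA
  set B : Set Ω := {ω | M/2 < |X ω i + 0 - 0|} with hB
  have hcover : (Set.univ : Set Ω) ⊆ A ∪ B := by
    intro ω _
    by_cases hcase : M/2 < |X ω i + 0 - 0|
    · exact Or.inr hcase
    · left
      push_neg at hcase
      show M/3 < |X ω i + M - 0|
      rw [sub_zero]
      simp only [add_zero, sub_zero] at hcase
      have : -(M/2) ≤ X ω i := neg_le_of_abs_le hcase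
      have : M/2 ≤ X ω i + M := by linarith
      have h4 := le_abs_self (X ω i + M)
      linarith
  have hle : (1 : ℝ≥0∞) ≤
      ENNReal.ofReal (2 * Real.exp (-(c * (M/3) ^ 2) / ((1:NNReal) : ℝ) ^ 2))
      + ENNReal.ofReal (2 * Real.exp (-(c * (M/2) ^ 2) / ((1:NNReal) : ℝ) ^ 2)) := by
    calc (1 : ℝ≥0∞) = μ Set.univ := (measure_univ).symm
      _ ≤ μ (A ∪ B) := measure_mono hcover
      _ ≤ _ := le_trans (measure_union_le _ _) (add_le_add h1 h2)
  have e1 : -(c * (M/3) ^ 2) / ((1:NNReal) : ℝ) ^ 2 = -9 := by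
    rw [div_pow, hM2]
    field_simp
    norm_num
  have e2 : -(c * (M/2) ^ 2) / ((1:NNReal) : ℝ) ^ 2 = -(81/4) := by
    rw [div_pow, hM2]
    field_simp
    norm_num
  rw [e1, e2, ← ENNReal.ofReal_add (by positivity) (by positivity)] at hle
  have hexp : (10 : ℝ) ≤ Real.exp 9 := by
    have := Real.add_one_le_exp (9 : ℝ); linarith
  have hlt : 2 * Real.exp (-9) + 2 * Real.exp (-(81/4)) < 1 := by
    have h9 : Real.exp (-9) ≤ 1/10 := by
      rw [Real.exp_neg]
      rw [inv_le_comm₀ (Real.exp_pos _) (by norm_num)] at *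
      · linarith
    have h81 : Real.exp (-(81/4)) ≤ Real.exp (-9) :=
      Real.exp_le_exp.mpr (by norm_num)
    linarith
  have : (1 : ℝ≥0∞) < 1 := lt_of_le_of_lt hle (ENNReal.ofReal_lt_one.mpr hlt)
  exact absurd this (lt_irrefl _)

lemma lipconc_integrable {Ω ι : Type*} [MeasurableSpace Ω] [Fintype ι]
    {μ : Measure Ω} [IsProbabilityMeasure μ] {X : Ω → EuclideanSpace ℝ ι} {c : ℝ}
    (hc : 0 < c) (h : LipConc μ X c) {L : NNReal} {τ : EuclideanSpace ℝ ι → ℝ}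
    (hτ : LipschitzWith L τ) : Integrable (fun ω => τ (X ω)) μ := by
  have hXm := lipconc_aemeasurable hc h
  have hτm : AEMeasurable (fun ω => τ (X ω)) μ :=
    hτ.continuous.measurable.comp_aemeasurable hXm
  have hsm : AEStronglyMeasurable (fun ω => τ (X ω)) μ := hτm.aestronglyMeasurable
  by_cases hL : (L : ℝ) = 0
  · have hconst : ∀ x, τ x = τ 0 := by
      intro x
      have := hτ.dist_le_mul x 0
      rw [hL, zero_mul] at this
      exact dist_le_zero.mp this
    simp only [hconst]
    exact integrable_const _
  have hL' : (0:ℝ) < (L : ℝ) := lt_of_le_of_ne (NNReal.coe_nonneg L) (Ne.symm hL)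
  set m := ∫ ω, τ (X ω) ∂μ with hm
  have hg_sm : AEStronglyMeasurable (fun ω => τ (X ω) - m) μ := hsm.sub aestronglyMeasurable_const
  have hf_am : AEMeasurable (fun ω => |τ (X ω) - m|) μ := by simpa [Real.norm_eq_abs] using (hτm.sub_const m).norm
  set a : ℝ := c / (L:ℝ)^2 with ha
  have hapos : 0 < a := by positivity
  have hbound : Integrable (fun t : ℝ => 2 * Real.exp (-a * t^2)) :=
    (integrable_exp_neg_mul_sq hapos).const_mul 2
  have hfin : ∫⁻ ω, ENNReal.ofReal (|τ (X ω) - m|) ∂μ < ⊤ := by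
    rw [lintegral_eq_lintegral_meas_lt μ (Filter.Eventually.of_forall fun ω => abs_nonneg _)
      hf_am]
    have step1 : ∫⁻ t in Set.Ioi (0:ℝ), μ {ω | t < |τ (X ω) - m|}
        ≤ ∫⁻ t in Set.Ioi (0:ℝ), ENNReal.ofReal (2 * Real.exp (-a * t^2)) := by
      apply setLIntegral_mono (by fun_prop)
      intro t ht
      have := h L τ hτ t ht
      rw [← hm] at this
      convert this using 3
      rw [ha]; field_simp
    refine lt_of_le_of_lt step1 (lt_of_le_of_lt (setLIntegral_le_lintegral _ _) ?_)
    have := hbound.hasFiniteIntegral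
    rw [HasFiniteIntegral] at this
    refine lt_of_le_of_lt (le_of_eq ?_) this
    apply lintegral_congr
    intro t
    rw [← ofReal_norm_eq_enorm, Real.norm_eq_abs,
      abs_of_nonneg (by positivity)]
  have hdiff : Integrable (fun ω => τ (X ω) - m) μ := by
    refine ⟨hg_sm, ?_⟩
    rw [HasFiniteIntegral]
    refine lt_of_le_of_lt (le_of_eq ?_) hfin
    apply lintegral_congr
    intro ω
    rw [← ofReal_norm_eq_enorm, Real.norm_eq_abs]
  have h2 : Integrable (fun ω => (τ (X ω) - m) + m) μ := hdiff.add (integrable_const m)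
  simpa using h2

noncomputable def concat {α β : Type*} (x : EuclideanSpace ℝ α) (y : EuclideanSpace ℝ β) :
    EuclideanSpace ℝ (α ⊕ β) :=
  (WithLp.equiv 2 ((α ⊕ β) → ℝ)).symm
    (Sum.elim ((WithLp.equiv 2 (α → ℝ)) x) ((WithLp.equiv 2 (β → ℝ)) y))

lemma concat_inl {α β : Type*} (x : EuclideanSpace ℝ α) (y : EuclideanSpace ℝ β) (i : α) :
    concat x y (Sum.inl i) = x i := rfl

lemma concat_inr {α β : Type*} (x : EuclideanSpace ℝ α) (y : EuclideanSpace ℝ β) (j : β) :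
    concat x y (Sum.inr j) = y j := rfl

lemma dist_concat_left {α β : Type*} [Fintype α] [Fintype β]
    (x x' : EuclideanSpace ℝ α) (y : EuclideanSpace ℝ β) :
    dist (concat x y) (concat x' y) = dist x x' := by
  rw [EuclideanSpace.dist_eq, EuclideanSpace.dist_eq, Fintype.sum_sum_type]
  simp [concat_inl, concat_inr]

lemma dist_concat_right {α β : Type*} [Fintype α] [Fintype β]
    (x : EuclideanSpace ℝ α) (y y' : EuclideanSpace ℝ β) :
    dist (concat x y) (concat x y') = dist y y' := by
  rw [EuclideanSpace.dist_eq, EuclideanSpace.dist_eq, Fintype.sum_sum_type]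
  simp [concat_inl, concat_inr]

lemma dist_concat_le {α β : Type*} [Fintype α] [Fintype β]
    (x x' : EuclideanSpace ℝ α) (y y' : EuclideanSpace ℝ β) :
    dist (concat x y) (concat x' y') ≤ dist x x' + dist y y' := by
  calc dist (concat x y) (concat x' y')
      ≤ dist (concat x y) (concat x' y) + dist (concat x' y) (concat x' y') := dist_triangle _ _ _
    _ = dist x x' + dist y y' := by rw [dist_concat_left, dist_concat_right]

lemma concat_lipschitz {α β : Type*} [Fintype α] [Fintype β] :
    LipschitzWith 2 (fun p : EuclideanSpace ℝ α × EuclideanSpace ℝ β => concat p.1 p.2) := by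
  refine LipschitzWith.of_dist_le_mul fun p q => ?_
  refine le_trans (dist_concat_le _ _ _ _) ?_
  have h1 : dist p.1 q.1 ≤ dist p q := le_max_left _ _
  have h2 : dist p.2 q.2 ≤ dist p q := le_max_right _ _
  push_cast
  linarith

lemma lipschitz_dist_zero {α : Type*} [Fintype α] :
    LipschitzWith 1 (fun v : EuclideanSpace ℝ α => dist v 0) := by
  refine LipschitzWith.of_dist_le_mul fun x y => ?_
  rw [NNReal.coe_one, one_mul, Real.dist_eq]
  exact abs_dist_sub_le _ _ _

theorem stmt10 {Ω : Type*} [MeasurableSpace Ω] (μ : Measure Ω) [IsProbabilityMeasure μ]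
    (dx dy : ℕ)
    (X : Ω → EuclideanSpace ℝ (Fin dx)) (Y : Ω → EuclideanSpace ℝ (Fin dy))
    (hX : ∃ c > 0, LipConc μ X c) (hY : ∃ c > 0, LipConc μ Y c)
    (hindep : ProbabilityTheory.IndepFun X Y μ)
    (Z : Ω → EuclideanSpace ℝ (Fin dx ⊕ Fin dy))
    (hZ : ∀ ω, Z ω = (WithLp.equiv 2 ((Fin dx ⊕ Fin dy) → ℝ)).symm
      (Sum.elim ((WithLp.equiv 2 (Fin dx → ℝ)) (X ω)) ((WithLp.equiv 2 (Fin dy → ℝ)) (Y ω)))) :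
    ∃ c > 0, LipConc μ Z c := by
  obtain ⟨cX, hcX, hXc⟩ := hX
  obtain ⟨cY, hcY, hYc⟩ := hY
  set c : ℝ := min cX cY / 8 with hcdef
  have hc : 0 < c := by positivity
  refine ⟨c, hc, ?_⟩
  intro L τ hτ t ht
  have hZc : ∀ ω, Z ω = concat (X ω) (Y ω) := hZ
  -- trivial case: small exponent
  by_cases hsmall : c * t ^ 2 / (L : ℝ) ^ 2 ≤ Real.log 2
  · have h1 : (1 : ℝ) ≤ 2 * Real.exp (-(c * t ^ 2) / (L : ℝ) ^ 2) := by
      have : Real.exp (-Real.log 2) ≤ Real.exp (-(c * t ^ 2) / (L : ℝ) ^ 2) := by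
        apply Real.exp_le_exp.mpr
        rw [neg_div]
        exact neg_le_neg hsmall
      rw [Real.exp_neg, Real.exp_log two_pos] at this
      linarith
    exact le_trans prob_le_one (ENNReal.one_le_ofReal.mpr h1 |>.trans (le_refl _))
  push_neg at hsmall
  have hlog2 : 0 < Real.log 2 := Real.log_pos one_lt_two
  have hL : (0:ℝ) < (L : ℝ) := by
    rcases eq_or_lt_of_le (NNReal.coe_nonneg L) with hL0 | hL0
    · exfalso
      rw [← hL0] at hsmall
      simp at hsmall
      linarith
    · exact hL0
  -- measurability
  have hXm : AEMeasurable X μ := lipconc_aemeasurable hcX hXc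
  have hYm : AEMeasurable Y μ := lipconc_aemeasurable hcY hYc
  have hWm : AEMeasurable (fun ω => (X ω, Y ω)) μ := hXm.prodMk hYm
  set F : EuclideanSpace ℝ (Fin dx) × EuclideanSpace ℝ (Fin dy) → ℝ :=
    fun p => τ (concat p.1 p.2) with hFdef
  have hFcont : Continuous F := hτ.continuous.comp concat_lipschitz.continuous
  -- Lipschitz in each slot
  have hFlipy : ∀ x, LipschitzWith L (fun y => F (x, y)) := by
    intro x
    refine LipschitzWith.of_dist_le_mul fun y y' => ?_
    calc dist (F (x, y)) (F (x, y')) ≤ L * dist (concat x y) (concat x y') := hτ.dist_le_mul _ _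
      _ = L * dist y y' := by rw [dist_concat_right]
  set g : EuclideanSpace ℝ (Fin dx) → ℝ := fun x => ∫ ω, F (x, Y ω) ∂μ with hgdef
  have hFyint : ∀ x, Integrable (fun ω => F (x, Y ω)) μ :=
    fun x => lipconc_integrable hcY hYc (hFlipy x)
  have hglip : LipschitzWith L g := by
    refine LipschitzWith.of_dist_le_mul fun x x' => ?_
    rw [Real.dist_eq, hgdef]
    have hdiff : ∀ ω, |F (x, Y ω) - F (x', Y ω)| ≤ (L : ℝ) * dist x x' := by
      intro ω
      have := hτ.dist_le_mul (concat x (Y ω)) (concat x' (Y ω))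
      rw [dist_concat_left] at this
      simpa [Real.dist_eq] using this
    rw [← integral_sub (hFyint x) (hFyint x')]
    calc |∫ ω, (F (x, Y ω) - F (x', Y ω)) ∂μ| ≤ ∫ ω, |F (x, Y ω) - F (x', Y ω)| ∂μ := by
          simpa [Real.norm_eq_abs] using
            norm_integral_le_integral_norm (fun ω => F (x, Y ω) - F (x', Y ω))
      _ ≤ ∫ _ω, (L : ℝ) * dist x x' ∂μ := by
          apply integral_mono ((hFyint x).sub (hFyint x')).abs (integrable_const _)
          exact hdiff
      _ = (L : ℝ) * dist x x' := by simp
  -- product measure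
  set ν₁ := μ.map X with hν₁
  set ν₂ := μ.map Y with hν₂
  have hP1 : IsProbabilityMeasure ν₁ := Measure.isProbabilityMeasure_map hXm
  have hP2 : IsProbabilityMeasure ν₂ := Measure.isProbabilityMeasure_map hYm
  have hprod : μ.map (fun ω => (X ω, Y ω)) = ν₁.prod ν₂ :=
    (ProbabilityTheory.indepFun_iff_map_prod_eq_prod_map_map hXm hYm).mp hindep
  -- integrability of F ∘ W
  have hFWsm : AEStronglyMeasurable (fun ω => F (X ω, Y ω)) μ :=
    (hFcont.measurable.comp_aemeasurable hWm).aestronglyMeasurable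
  have hFWint : Integrable (fun ω => F (X ω, Y ω)) μ := by
    have hb1 : Integrable (fun ω => dist (X ω) 0) μ :=
      lipconc_integrable hcX hXc lipschitz_dist_zero
    have hb2 : Integrable (fun ω => dist (Y ω) 0) μ :=
      lipconc_integrable hcY hYc lipschitz_dist_zero
    refine Integrable.mono'
      ((((hb1.const_mul (L:ℝ)).add (hb2.const_mul (L:ℝ))).add
        (integrable_const (|F ((0:EuclideanSpace ℝ (Fin dx)), (0:EuclideanSpace ℝ (Fin dy)))|))))
      hFWsm ?_
    filter_upwards with ω
    simp only [Pi.add_apply]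
    rw [Real.norm_eq_abs]
    have t1 : |F (X ω, Y ω) - F ((0:EuclideanSpace ℝ (Fin dx)), Y ω)| ≤ (L:ℝ) * dist (X ω) 0 := by
      have := hτ.dist_le_mul (concat (X ω) (Y ω)) (concat 0 (Y ω))
      rw [dist_concat_left] at this
      simpa [Real.dist_eq] using this
    have t2 : |F ((0:EuclideanSpace ℝ (Fin dx)), Y ω) - F (0, 0)| ≤ (L:ℝ) * dist (Y ω) 0 := by
      have := hτ.dist_le_mul (concat (0:EuclideanSpace ℝ (Fin dx)) (Y ω))
        (concat (0:EuclideanSpace ℝ (Fin dx)) (0:EuclideanSpace ℝ (Fin dy)))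
      rw [dist_concat_right] at this
      simpa [Real.dist_eq] using this
    have habs : |F (X ω, Y ω)| ≤ |F (X ω, Y ω) - F (0, Y ω)| + |F (0, Y ω) - F (0,0)| + |F (0,0)| := by
      have := abs_add_le (F (X ω, Y ω) - F (0, Y ω) + (F (0, Y ω) - F (0,0))) (F (0,0))
      have h2 := abs_add_le (F (X ω, Y ω) - F (0, Y ω)) (F (0, Y ω) - F (0,0))
      calc |F (X ω, Y ω)| = |F (X ω, Y ω) - F (0, Y ω) + (F (0, Y ω) - F (0,0)) + F (0,0)| := by ring_nf
        _ ≤ _ := by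
          refine le_trans this ?_
          linarith
    linarith
  have hFprodint : Integrable F (ν₁.prod ν₂) := by
    rw [← hprod]
    exact (integrable_map_measure hFcont.aestronglyMeasurable hWm).mpr hFWint
  -- Fubini: center identification
  have hgx : ∀ x, g x = ∫ y, F (x, y) ∂ν₂ := by
    intro x
    rw [hν₂, integral_map hYm]
    exact ((hFcont.comp (Continuous.prodMk_right x)).aestronglyMeasurable)
  have hm_eq : ∫ ω, τ (Z ω) ∂μ = ∫ ω, g (X ω) ∂μ := by
    have e1 : ∫ ω, τ (Z ω) ∂μ = ∫ ω, F (X ω, Y ω) ∂μ := by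
      apply integral_congr_ae
      filter_upwards with ω
      rw [hZc ω]
    have e2 : ∫ ω, F (X ω, Y ω) ∂μ = ∫ p, F p ∂(ν₁.prod ν₂) := by
      rw [← hprod, integral_map hWm hFcont.aestronglyMeasurable]
    have e3 : ∫ p, F p ∂(ν₁.prod ν₂) = ∫ x, ∫ y, F (x, y) ∂ν₂ ∂ν₁ :=
      integral_prod F hFprodint
    have e4 : ∫ x, (∫ y, F (x, y) ∂ν₂) ∂ν₁ = ∫ x, g x ∂ν₁ := by
      apply integral_congr_ae
      filter_upwards with x
      rw [hgx x]
    have e5 : ∫ x, g x ∂ν₁ = ∫ ω, g (X ω) ∂μ := by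
      rw [hν₁, integral_map hXm hglip.continuous.aestronglyMeasurable]
    rw [e1, e2, e3, e4, e5]
  -- union bound
  set S1 : Set Ω := {ω | t/2 < |F (X ω, Y ω) - g (X ω)|} with hS1
  set S2 : Set Ω := {ω | t/2 < |g (X ω) - ∫ ω', g (X ω') ∂μ|} with hS2
  have hsub : {ω | t < |τ (Z ω) - ∫ ω', τ (Z ω') ∂μ|} ⊆ S1 ∪ S2 := by
    intro ω hω
    simp only [Set.mem_setOf_eq] at hω
    by_contra hcon
    simp only [Set.mem_union, Set.mem_setOf_eq, not_or, not_lt] at hcon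
    obtain ⟨h1, h2⟩ := hcon
    have h1' : |F (X ω, Y ω) - g (X ω)| ≤ t/2 := not_lt.mp h1
    have h2' : |g (X ω) - ∫ ω', g (X ω') ∂μ| ≤ t/2 := not_lt.mp h2
    rw [hZc ω, hm_eq] at hω
    have key : |F (X ω, Y ω) - ∫ ω', g (X ω') ∂μ| ≤
        |F (X ω, Y ω) - g (X ω)| + |g (X ω) - ∫ ω', g (X ω') ∂μ| := by
      have := abs_add_le (F (X ω, Y ω) - g (X ω)) (g (X ω) - ∫ ω', g (X ω') ∂μ)
      calc |F (X ω, Y ω) - ∫ ω', g (X ω') ∂μ|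
          = |(F (X ω, Y ω) - g (X ω)) + (g (X ω) - ∫ ω', g (X ω') ∂μ)| := by ring_nf
        _ ≤ _ := this
    linarith
  -- bound on S2
  have hS2b : μ S2 ≤ ENNReal.ofReal (2 * Real.exp (-(cX * (t/2) ^ 2) / (L : ℝ) ^ 2)) :=
    hXc L g hglip (t/2) (by positivity)
  -- bound on S1
  have hS1b : μ S1 ≤ ENNReal.ofReal (2 * Real.exp (-(cY * (t/2) ^ 2) / (L : ℝ) ^ 2)) := by
    set T : Set (EuclideanSpace ℝ (Fin dx) × EuclideanSpace ℝ (Fin dy)) :=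
      {p | t/2 < |F p - g p.1|} with hT
    have hTmeas : MeasurableSet T := by
      have : Continuous (fun p : EuclideanSpace ℝ (Fin dx) × EuclideanSpace ℝ (Fin dy) =>
        |F p - g p.1|) := (hFcont.sub (hglip.continuous.comp continuous_fst)).abs
      exact measurableSet_lt measurable_const this.measurable
    have hpre : S1 = (fun ω => (X ω, Y ω)) ⁻¹' T := rfl
    rw [hpre, ← Measure.map_apply_of_aemeasurable hWm hTmeas, hprod, Measure.prod_apply hTmeas]
    have hslice : ∀ x, ν₂ (Prod.mk x ⁻¹' T) ≤
        ENNReal.ofReal (2 * Real.exp (-(cY * (t/2) ^ 2) / (L : ℝ) ^ 2)) := by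
      intro x
      have hsm : MeasurableSet {y : EuclideanSpace ℝ (Fin dy) | t/2 < |F (x, y) - g x|} := by
        have : Continuous (fun y : EuclideanSpace ℝ (Fin dy) => |F (x, y) - g x|) :=
          (((hFlipy x).continuous).sub continuous_const).abs
        exact measurableSet_lt measurable_const this.measurable
      have : ν₂ (Prod.mk x ⁻¹' T) = μ {ω | t/2 < |F (x, Y ω) - g x|} := by
        rw [hν₂, Measure.map_apply_of_aemeasurable hYm (hTmeas.preimage measurable_prodMk_left)]
        rfl
      rw [this]
      exact hYc L (fun y => F (x, y)) (hFlipy x) (t/2) (by positivity)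
    calc ∫⁻ x, ν₂ (Prod.mk x ⁻¹' T) ∂ν₁
        ≤ ∫⁻ _x, ENNReal.ofReal (2 * Real.exp (-(cY * (t/2) ^ 2) / (L : ℝ) ^ 2)) ∂ν₁ :=
          lintegral_mono hslice
      _ = ENNReal.ofReal (2 * Real.exp (-(cY * (t/2) ^ 2) / (L : ℝ) ^ 2)) := by
          rw [lintegral_const, measure_univ, mul_one]
  -- combine
  have hsum : μ {ω | t < |τ (Z ω) - ∫ ω', τ (Z ω') ∂μ|} ≤
      ENNReal.ofReal (2 * Real.exp (-(cY * (t/2) ^ 2) / (L : ℝ) ^ 2)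
        + 2 * Real.exp (-(cX * (t/2) ^ 2) / (L : ℝ) ^ 2)) := by
    rw [ENNReal.ofReal_add (by positivity) (by positivity)]
    exact le_trans (measure_mono hsub)
      (le_trans (measure_union_le _ _) (add_le_add hS1b hS2b))
  refine le_trans hsum (ENNReal.ofReal_le_ofReal ?_)
  -- final numeric inequality
  set s : ℝ := t ^ 2 / (L : ℝ) ^ 2 with hs
  have hspos : 0 < s := by positivity
  have hcs : Real.log 2 < c * s := by
    rw [hs, ← mul_div_assoc]
    exact hsmall
  have hexp_half : Real.exp (-(c * s)) ≤ 1/2 := by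
    have hmono : Real.exp (-(c * s)) ≤ Real.exp (-Real.log 2) :=
      Real.exp_le_exp.mpr (by linarith)
    have heq : Real.exp (-Real.log 2) = 1/2 := by
      rw [Real.exp_neg, Real.exp_log two_pos]
      norm_num
    linarith
  have hX4 : -(cX * (t/2) ^ 2) / (L : ℝ) ^ 2 ≤ -(2 * (c * s)) := by
    rw [neg_div]
    have h8 : c ≤ cX / 8 := by
      rw [hcdef]
      have := min_le_left cX cY
      linarith
    rw [hs]
    rw [neg_le_neg_iff]
    calc 2 * (c * (t^2 / (L:ℝ)^2)) ≤ 2 * ((cX/8) * (t^2/(L:ℝ)^2)) := by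
          have : 0 ≤ t^2/(L:ℝ)^2 := by positivity
          nlinarith
      _ = cX * (t/2)^2 / (L:ℝ)^2 := by ring
  have hY4 : -(cY * (t/2) ^ 2) / (L : ℝ) ^ 2 ≤ -(2 * (c * s)) := by
    rw [neg_div]
    have h8 : c ≤ cY / 8 := by
      rw [hcdef]
      have := min_le_right cX cY
      linarith
    rw [hs]
    rw [neg_le_neg_iff]
    calc 2 * (c * (t^2 / (L:ℝ)^2)) ≤ 2 * ((cY/8) * (t^2/(L:ℝ)^2)) := by
          have : 0 ≤ t^2/(L:ℝ)^2 := by positivity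
          nlinarith
      _ = cY * (t/2)^2 / (L:ℝ)^2 := by ring
  have hfinal : -(c * t ^ 2) / (L : ℝ) ^ 2 = -(c * s) := by
    rw [hs]; ring
  rw [hfinal]
  have e2cs : Real.exp (-(2 * (c * s))) = Real.exp (-(c*s)) * Real.exp (-(c*s)) := by
    rw [← Real.exp_add]; ring_nf
  have epos : 0 < Real.exp (-(c*s)) := Real.exp_pos _
  calc 2 * Real.exp (-(cY * (t/2) ^ 2) / (L : ℝ) ^ 2)
        + 2 * Real.exp (-(cX * (t/2) ^ 2) / (L : ℝ) ^ 2)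
      ≤ 2 * Real.exp (-(2 * (c * s))) + 2 * Real.exp (-(2 * (c * s))) := by
        have := Real.exp_le_exp.mpr hY4
        have := Real.exp_le_exp.mpr hX4
        linarith
    _ = 4 * (Real.exp (-(c*s)) * Real.exp (-(c*s))) := by rw [e2cs]; ring
    _ ≤ 4 * ((1/2) * Real.exp (-(c*s))) := by nlinarith
    _ = 2 * Real.exp (-(c * s)) := by ring
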